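/- Let G = (V, E) be a finite simple graph and let x, y ∈ V be non-adjacent vertices. Let M be the vertex set of the connected component containing y of the induced subgraph G_{V \ ({x} ∪ N_G(x))}. Then N_G(M) is a minimal xy-separator in G and N_G(M) ⊆ N_G(x). (Correctness of the CloseSeparator procedure of Takata, on which the CMSA algorithm relies.) -/

import Mathlib

/-- `S` separates `X` from `Y` in `G`: every path in `G` from a vertex of `X`
to a vertex of `Y` contains a vertex of `S`. -/
def Separates {V : Type*} (G : SimpleGraph V) (X Y S : Set V) : Prop :=
  ∀ ⦃a b : V⦄, a ∈ X → b ∈ Y → ∀ p : G.Walk a b, p.IsPath → ∃ s ∈ S, s ∈ p.support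

/-- `S` is an `xy`-separator in `G`: `S ⊆ V \ {x, y}` and `S` separates `{x}` from `{y}`. -/
def IsSeparator {V : Type*} (G : SimpleGraph V) (x y : V) (S : Set V) : Prop :=
  S ⊆ ({x, y} : Set V)ᶜ ∧ Separates G {x} {y} S

/-- `S` is a minimal `xy`-separator in `G`: it is an `xy`-separator and no proper
subset of `S` is an `xy`-separator. -/
def IsMinSeparator {V : Type*} (G : SimpleGraph V) (x y : V) (S : Set V) : Prop :=
  IsSeparator G x y S ∧ ∀ T ⊂ S, ¬ IsSeparator G x y T

/-- `G` is collapsible onto `A` (Asmussen–Edwards characterization): for all pairwise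
disjoint `X, Y, Z` with `X ⊆ A` and `Y ⊆ A`, if `Z` separates `X` from `Y`, then so
does `Z ∩ A`. -/
def Collapsible {V : Type*} (G : SimpleGraph V) (A : Set V) : Prop :=
  ∀ X Y Z : Set V, X ⊆ A → Y ⊆ A → Disjoint X Y → Disjoint X Z → Disjoint Y Z →
    Separates G X Y Z → Separates G X Y (Z ∩ A)

/-- The neighbour set `N_G(W)`: vertices outside `W` adjacent in `G` to some vertex of `W`. -/
def nbhd {V : Type*} (G : SimpleGraph V) (W : Set V) : Set V :=
  {v | v ∉ W ∧ ∃ w ∈ W, G.Adj v w}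

/-- `M` is the vertex set of a connected component of the induced subgraph `G_W`. -/
def IsCompOf {V : Type*} (G : SimpleGraph V) (W M : Set V) : Prop :=
  ∃ c : (G.induce W).ConnectedComponent, M = Subtype.val '' c.supp

/-- A subset of `V` is complete in `G` if its vertices are pairwise adjacent. -/
def CompleteIn {V : Type*} (G : SimpleGraph V) (S : Set V) : Prop :=
  ∀ x ∈ S, ∀ y ∈ S, x ≠ y → G.Adj x y


section Aux
variable {V : Type*} {G : SimpleGraph V}

/-- Crossing lemma: a walk from outside `M` to inside `M` hits `nbhd G M`. -/
lemma cross_nbhd {M : Set V} : ∀ {a b : V} (p : G.Walk a b), a ∉ M → b ∈ M →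
    ∃ s ∈ nbhd G M, s ∈ p.support := by
  intro a b p
  induction p with
  | nil => intro ha hb; exact absurd hb ha
  | @cons u v w h p ih =>
    intro ha hb
    by_cases hv : v ∈ M
    · exact ⟨u, ⟨ha, v, hv, h⟩, by simp⟩
    · obtain ⟨s, hs, hsp⟩ := ih hv hb
      exact ⟨s, hs, by simp [hsp]⟩

lemma walk_in_comp {W : Set V} (c : (G.induce W).ConnectedComponent)
    (a b : W) (ha : a ∈ c.supp) (hb : b ∈ c.supp) :
    ∃ r : G.Walk a.val b.val, ∀ u ∈ r.support, u ∈ Subtype.val '' c.supp := by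
  classical
  rw [SimpleGraph.ConnectedComponent.mem_supp_iff] at ha hb
  have hr : (G.induce W).Reachable a b :=
    SimpleGraph.ConnectedComponent.exact (ha.trans hb.symm)
  obtain ⟨p⟩ := hr
  let φ : G.induce W →g G := ⟨Subtype.val, fun h => h⟩
  refine ⟨p.map φ, ?_⟩
  intro u hu
  rw [SimpleGraph.Walk.support_map, List.mem_map] at hu
  obtain ⟨u', hu', rfl⟩ := hu
  refine ⟨u', ?_, rfl⟩
  rw [SimpleGraph.ConnectedComponent.mem_supp_iff, ← ha]
  exact (SimpleGraph.ConnectedComponent.sound (p.takeUntil u' hu').reachable).symm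

end Aux

/-- Correctness of Takata's CloseSeparator procedure: for non-adjacent `x, y`, if `M`
is the vertex set of the connected component containing `y` of the subgraph induced
by `V \\ ({x} ∪ N_G(x))`, then `N_G(M)` is a minimal `xy`-separator contained
in `N_G(x)`. -/

theorem closeSeparator_correct
    {V : Type*} [Fintype V] (G : SimpleGraph V) (x y : V)
    (hne : x ≠ y) (hadj : ¬ G.Adj x y) (M : Set V)
    (hM : IsCompOf G ({x} ∪ G.neighborSet x)ᶜ M) (hyM : y ∈ M) :
    IsMinSeparator G x y (nbhd G M) ∧ nbhd G M ⊆ G.neighborSet x := by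
  classical
  set W : Set V := ({x} ∪ G.neighborSet x)ᶜ with hW
  obtain ⟨c, hMc⟩ := hM
  have hMW : M ⊆ W := by
    rintro v hv; rw [hMc] at hv; obtain ⟨v', _, rfl⟩ := hv; exact v'.2
  -- vertices of W adjacent to M are in M
  have habsorb : ∀ v ∈ W, (∃ w ∈ M, G.Adj v w) → v ∈ M := by
    rintro v hvW ⟨w, hwM, hvw⟩
    rw [hMc] at hwM ⊢
    obtain ⟨w', hw', rfl⟩ := hwM
    refine ⟨⟨v, hvW⟩, ?_, rfl⟩
    rw [SimpleGraph.ConnectedComponent.mem_supp_iff] at hw' ⊢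
    rw [← hw']
    exact SimpleGraph.ConnectedComponent.connectedComponentMk_eq_of_adj hvw
  have hxW : x ∉ W := by simp [hW]
  have hxM : x ∉ M := fun h => hxW (hMW h)
  -- nbhd G M ⊆ N(x)
  have hsub : nbhd G M ⊆ G.neighborSet x := by
    rintro v ⟨hvM, w, hwM, hvw⟩
    have hvW : v ∉ W := fun hvW => hvM (habsorb v hvW ⟨w, hwM, hvw⟩)
    rw [hW] at hvW
    simp only [Set.mem_compl_iff, not_not, Set.mem_union, Set.mem_singleton_iff] at hvW
    rcases hvW with rfl | hv
    · exact ((hMW hwM) (Or.inr hvw)).elim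
    · exact hv
  have hxS : x ∉ nbhd G M := fun h => G.loopless.irrefl x (hsub h)
  have hyS : y ∉ nbhd G M := fun h => h.1 hyM
  refine ⟨⟨⟨?_, ?_⟩, ?_⟩, hsub⟩
  · -- nbhd G M ⊆ {x,y}ᶜ
    intro v hv
    simp only [Set.mem_compl_iff, Set.mem_insert_iff, Set.mem_singleton_iff]
    rintro (rfl | rfl)
    · exact hxS hv
    · exact hyS hv
  · -- separates
    rintro a b rfl rfl p _
    exact cross_nbhd p hxM hyM
  · -- minimality
    rintro T ⟨hTS, hTne⟩ ⟨hT1, hT2⟩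
    obtain ⟨s, hsS, hsT⟩ := Set.exists_of_ssubset ⟨hTS, hTne⟩
    have hxs : G.Adj x s := hsub hsS
    obtain ⟨hsM, w, hwM, hsw⟩ := hsS
    -- walk from w to y inside M
    rw [hMc] at hwM hyM
    obtain ⟨w', hw', rfl⟩ := hwM
    obtain ⟨y', hy', rfl⟩ := hyM
    obtain ⟨r, hr⟩ := walk_in_comp c w' y' hw' hy'
    have hrM : ∀ u ∈ r.support, u ∈ M := by
      intro u hu; rw [hMc]; exact hr u hu
    -- build the walk x - s - w ... y
    let q : G.Walk x y'.val := SimpleGraph.Walk.cons hxs (SimpleGraph.Walk.cons hsw r)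
    obtain ⟨t, htT, htp⟩ := hT2 rfl rfl q.toPath q.toPath.2
    have htq : t ∈ q.support := q.support_toPath_subset htp
    have htS := hTS htT
    simp only [q, SimpleGraph.Walk.support_cons, List.mem_cons] at htq
    rcases htq with rfl | rfl | htq
    · exact hxS htS
    · exact hsT htT
    · exact htS.1 (hrM t htq)
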